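/- arXiv:2004.11830 — 3 statements merged into one kernel-verified Lean document; each statement's English description precedes it below -/
import Mathlib

section
/- For all r, s > 0, the integral over z ∈ (-∞,0) of K₀(r,z)·K₀(s,z) equals 1/(√(4π)·(r+s)^{3/2}), where K₀(t,z) = 2∂_z H(t,z) = -(z/t)·H(t,z). -/
open Real Set MeasureTheory

noncomputable def H (t z : ℝ) : ℝ := (4 * Real.pi * t) ^ (-(1:ℝ)/2) * Real.exp (-z^2 / (4*t))

noncomputable def K₀ (t z : ℝ) : ℝ := -(z / t) * H t z

lemma four_rpow : (4:ℝ) ^ ((3:ℝ)/2) = 8 := by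
  have h : (4:ℝ) ^ ((3:ℝ)/2) = ((4:ℝ) ^ ((1:ℝ)/2)) ^ (3:ℕ) := by
    rw [← Real.rpow_natCast ((4:ℝ) ^ ((1:ℝ)/2)) 3, ← Real.rpow_mul (by norm_num)]
    norm_num
  rw [h, ← Real.sqrt_eq_rpow, show (4:ℝ) = 2^2 by norm_num, Real.sqrt_sq (by norm_num)]
  norm_num

lemma gamma32 : Real.Gamma ((2+1)/2) = Real.sqrt Real.pi / 2 := by
  rw [show ((2:ℝ)+1)/2 = 1/2 + 1 by norm_num, Real.Gamma_add_one (by norm_num),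
    Real.Gamma_one_half_eq]
  ring

theorem M_zero_formula :
    ∀ r s : ℝ, 0 < r → 0 < s →
      ∫ z in Set.Iio (0:ℝ), K₀ r z * K₀ s z
        = 1 / (Real.sqrt (4 * Real.pi) * (r + s) ^ ((3:ℝ)/2)) := by
  intro r s hr hs
  have hπ := Real.pi_pos
  set a : ℝ := (r+s)/(4*r*s) with ha
  have ha0 : 0 < a := by positivity
  set C : ℝ := (4*Real.pi*r) ^ (-(1:ℝ)/2) * (4*Real.pi*s) ^ (-(1:ℝ)/2) / (r*s) with hC
  have hpt : ∀ z : ℝ, K₀ r z * K₀ s z = C * (z^2 * Real.exp (-a * z^2)) := by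
    intro z
    have hexp : Real.exp (-z^2/(4*r)) * Real.exp (-z^2/(4*s)) = Real.exp (-a*z^2) := by
      rw [← Real.exp_add]
      congr 1
      field_simp [ha]
      have ha' : a * (4*r*s) = r+s := by rw [ha]; exact div_mul_cancel₀ _ (by positivity)
      linear_combination z^2 * ha'
    simp only [K₀, H, hC]
    rw [← hexp]
    field_simp
  simp only [hpt]
  rw [MeasureTheory.integral_const_mul]
  have heven : (∫ z in Set.Iio (0:ℝ), z^2 * Real.exp (-a * z^2))
      = ∫ z in Set.Ioi (0:ℝ), z^2 * Real.exp (-a * z^2) := by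
    rw [← MeasureTheory.integral_Iic_eq_integral_Iio]
    have h := integral_comp_neg_Iic (0:ℝ) (fun z => z^2 * Real.exp (-a * z^2))
    simp only [neg_zero, neg_sq] at h
    exact h
  rw [heven]
  have hrpow : (∫ z in Set.Ioi (0:ℝ), z^2 * Real.exp (-a * z^2))
      = ∫ z in Set.Ioi (0:ℝ), z ^ (2:ℝ) * Real.exp (-a * z ^ (2:ℝ)) := by
    refine setIntegral_congr_fun measurableSet_Ioi (fun z hz => ?_)
    rw [show (2:ℝ) = ((2:ℕ):ℝ) by norm_num, Real.rpow_natCast]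
  rw [hrpow, integral_rpow_mul_exp_neg_mul_rpow (by norm_num) (by norm_num) ha0, gamma32]
  -- now pure algebra
  have h4πr : (4*Real.pi*r) ^ (-(1:ℝ)/2) = (4*Real.pi) ^ (-(1:ℝ)/2) * r ^ (-(1:ℝ)/2) := by
    rw [Real.mul_rpow (by positivity) hr.le]
  have h4πs : (4*Real.pi*s) ^ (-(1:ℝ)/2) = (4*Real.pi) ^ (-(1:ℝ)/2) * s ^ (-(1:ℝ)/2) := by
    rw [Real.mul_rpow (by positivity) hs.le]
  have hanum : a ^ (-((2:ℝ)+1)/2) = (4:ℝ)^((3:ℝ)/2) * r^((3:ℝ)/2) * s^((3:ℝ)/2) * ((r+s)^((3:ℝ)/2))⁻¹ := by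
    rw [ha, show (-((2:ℝ)+1)/2) = -((3:ℝ)/2) by norm_num,
      Real.rpow_neg (by positivity), ← Real.inv_rpow (by positivity), inv_div,
      Real.div_rpow (by positivity) (by positivity),
      Real.mul_rpow (by positivity) hs.le, Real.mul_rpow (by positivity) hr.le]
    field_simp
  rw [hC, h4πr, h4πs, hanum, four_rpow]
  have hrc : r ^ (-(1:ℝ)/2) * r ^ ((3:ℝ)/2) = r := by
    rw [← Real.rpow_add hr]; norm_num
  have hsc : s ^ (-(1:ℝ)/2) * s ^ ((3:ℝ)/2) = s := by
    rw [← Real.rpow_add hs]; norm_num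
  have h4π' : (4*Real.pi) ^ (-(1:ℝ)/2) * (4*Real.pi) ^ (-(1:ℝ)/2) * (4*Real.pi) = 1 := by
    rw [← Real.rpow_add (by positivity)]
    rw [show (-(1:ℝ)/2 + -(1:ℝ)/2) = -1 by norm_num, Real.rpow_neg_one]
    field_simp
  have hsqrt : Real.sqrt (4*Real.pi) = 2 * Real.sqrt Real.pi := by
    rw [show (4:ℝ)*Real.pi = 2^2 * Real.pi by ring, Real.sqrt_mul (by positivity),
      Real.sqrt_sq (by norm_num)]
  have hππ : Real.sqrt Real.pi * Real.sqrt Real.pi = Real.pi :=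
    Real.mul_self_sqrt hπ.le
  have hrsne : (r+s) ^ ((3:ℝ)/2) ≠ 0 := by positivity
  have hπne : Real.sqrt Real.pi ≠ 0 := by positivity
  rw [hsqrt]
  rw [show (4 * π) ^ (-(1:ℝ) / 2) * r ^ (-(1:ℝ) / 2) * ((4 * π) ^ (-(1:ℝ) / 2) * s ^ (-(1:ℝ) / 2)) / (r * s) *
      (8 * r ^ ((3:ℝ) / 2) * s ^ ((3:ℝ) / 2) * ((r + s) ^ ((3:ℝ) / 2))⁻¹ * (1 / 2) * (√π / 2))
      = (4 * π) ^ (-(1:ℝ) / 2) * (4 * π) ^ (-(1:ℝ) / 2) * (r ^ (-(1:ℝ) / 2) * r ^ ((3:ℝ) / 2))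
        * (s ^ (-(1:ℝ) / 2) * s ^ ((3:ℝ) / 2)) * (2 * √π) / (r * s) / (r + s) ^ ((3:ℝ) / 2) by ring,
    hrc, hsc, eq_inv_of_mul_eq_one_left h4π', ← hππ]
  field_simp
  rw [Real.sqrt_sq (Real.sqrt_nonneg _)]
  ring
end

section
/- Let φ : [0,∞) → ℝ be C¹ with φ(0) = 0 and define v(t,z) = ∫_0^t 2 ∂_z H(t-τ, z) φ(τ) dτ for z < 0, t > 0, where H is the one-dimensional heat kernel. Then ∂_z v(t,z) = ∫_0^t 2 H(t-τ, z) φ'(τ) dτ. -/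
open Real MeasureTheory Set Metric

lemma H_eq_zero {s : ℝ} (hs : s ≤ 0) (z : ℝ) : H s z = 0 := by
  unfold H
  rcases lt_or_eq_of_le hs with h | h
  · have h4 : 4 * Real.pi * s < 0 := by
      have := Real.pi_pos; nlinarith
    rw [Real.rpow_def_of_neg h4]
    have : Real.cos (-(1:ℝ)/2 * π) = 0 := by
      rw [show (-(1:ℝ)/2 * π) = -(π/2) by ring, Real.cos_neg, Real.cos_pi_div_two]
    rw [this]; ring
  · subst h
    rw [mul_zero, Real.zero_rpow (by norm_num), zero_mul]

lemma H_nonneg (s z : ℝ) : 0 ≤ H s z := by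
  rcases le_or_gt s 0 with h | h
  · rw [H_eq_zero h]
  · unfold H
    have h4 : 0 ≤ 4 * Real.pi * s := by have := Real.pi_pos; nlinarith
    exact mul_nonneg (Real.rpow_nonneg h4 _) (Real.exp_nonneg _)

lemma cube_le_exp {x : ℝ} (hx : 0 ≤ x) : x ^ 3 ≤ 27 * Real.exp x := by
  have h1 : x / 3 + 1 ≤ Real.exp (x / 3) := Real.add_one_le_exp (x / 3)
  have h3 : (x/3 + 1) ^ 3 ≤ Real.exp (x/3) ^ 3 := pow_le_pow_left₀ (by nlinarith) h1 3
  have h4 : Real.exp (x/3) ^ 3 = Real.exp x := by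
    rw [← Real.exp_nat_mul]; ring_nf
  nlinarith [h3, h4]

lemma exp_bound {s K c : ℝ} (hs : 0 < s) (hK : 0 < K) (hKc : K ≤ c) :
    Real.exp (-c / s) ≤ 27 * s ^ 3 / K ^ 3 := by
  have h1 : Real.exp (-c / s) ≤ Real.exp (-(K / s)) := by
    apply Real.exp_le_exp.2
    rw [neg_div]
    apply neg_le_neg
    gcongr
  have hx : (0:ℝ) ≤ K / s := by positivity
  have h2 : (K / s) ^ 3 ≤ 27 * Real.exp (K / s) := cube_le_exp hx
  have h5 : (0:ℝ) < (K/s)^3/27 := by positivity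
  have h6 : (K/s)^3/27 ≤ Real.exp (K/s) := by linarith
  have h7 : Real.exp (-(K/s)) ≤ ((K/s)^3/27)⁻¹ := by
    rw [Real.exp_neg]
    exact inv_anti₀ h5 h6
  have h8 : ((K/s)^3/27)⁻¹ = 27 * s^3 / K^3 := by
    field_simp
  linarith

lemma H_le {s z' K : ℝ} (hs : 0 < s) (hK : 0 < K) (hKz : K ≤ z' ^ 2 / 4) :
    H s z' ≤ 27 / (2 * K ^ 3) * s ^ 2 * Real.sqrt s := by
  have hpi := Real.pi_pos
  have h4 : (0:ℝ) < 4 * Real.pi * s := by nlinarith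
  have hsp : 0 < Real.sqrt s := Real.sqrt_pos.2 hs
  have hss : Real.sqrt s * Real.sqrt s = s := Real.mul_self_sqrt hs.le
  have e1 : (4 * Real.pi * s) ^ (-(1:ℝ)/2) ≤ (2 * Real.sqrt s)⁻¹ := by
    have eq1 : (4 * Real.pi * s) ^ (-(1:ℝ)/2) = (Real.sqrt (4 * Real.pi * s))⁻¹ := by
      rw [show (-(1:ℝ)/2) = -(1/2 : ℝ) by ring, Real.rpow_neg h4.le, ← Real.sqrt_eq_rpow]
    rw [eq1]
    have h2s : 2 * Real.sqrt s = Real.sqrt (4 * s) := by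
      rw [show (4:ℝ) * s = 2^2 * s by ring, Real.sqrt_mul (by positivity), Real.sqrt_sq (by norm_num)]
    rw [h2s]
    apply inv_anti₀ (Real.sqrt_pos.2 (by linarith))
    apply Real.sqrt_le_sqrt
    nlinarith [Real.pi_gt_three]
  have e2 : Real.exp (-z' ^ 2 / (4 * s)) ≤ 27 * s ^ 3 / K ^ 3 := by
    have : -z' ^ 2 / (4 * s) = -(z' ^ 2 / 4) / s := by ring
    rw [this]
    exact exp_bound hs hK hKz
  have hH : H s z' ≤ (2 * Real.sqrt s)⁻¹ * (27 * s ^ 3 / K ^ 3) := by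
    unfold H
    apply mul_le_mul e1 e2 (Real.exp_nonneg _) (by positivity)
  refine hH.trans (le_of_eq ?_)
  field_simp
  linear_combination (-1) * hss

lemma hasDerivAt_H_z {s : ℝ} (hs : 0 < s) (z : ℝ) :
    HasDerivAt (H s) (-(z / (2 * s)) * H s z) z := by
  have hc : H s = fun w => (4 * Real.pi * s) ^ (-(1:ℝ)/2) * Real.exp (-w ^ 2 / (4 * s)) := rfl
  rw [hc]
  have h1 : HasDerivAt (fun w : ℝ => -w ^ 2 / (4 * s)) (-(2 * z) / (4 * s)) z := by
    simpa using ((hasDerivAt_pow 2 z).neg).div_const (4 * s)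
  have h2 := h1.exp
  have h3 := h2.const_mul ((4 * Real.pi * s) ^ (-(1:ℝ)/2))
  refine h3.congr_deriv ?_
  show _ = -(z / (2 * s)) * ((4 * Real.pi * s) ^ (-(1:ℝ)/2) * Real.exp (-z ^ 2 / (4 * s)))
  field_simp
  ring

lemma hasDerivAt_H_zz {s : ℝ} (hs : 0 < s) (z : ℝ) :
    HasDerivAt (fun w => -(w / (2 * s)) * H s w)
      ((-1 / (2 * s) + z ^ 2 / (4 * s ^ 2)) * H s z) z := by
  have hf : HasDerivAt (fun w : ℝ => -(w / (2 * s))) (-(1 / (2 * s))) z := by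
    exact ((hasDerivAt_id z).div_const (2 * s)).neg
  have := hf.mul (hasDerivAt_H_z hs z)
  refine this.congr_deriv ?_
  have h2s : (2 * s) ≠ 0 := by positivity
  field_simp
  ring

lemma hasDerivAt_H_t_pos {s : ℝ} (hs : 0 < s) (z : ℝ) :
    HasDerivAt (fun r => H r z) ((-1 / (2 * s) + z ^ 2 / (4 * s ^ 2)) * H s z) s := by
  have hpi := Real.pi_pos
  have h4 : (0:ℝ) < 4 * Real.pi * s := by nlinarith
  have hlin : HasDerivAt (fun r : ℝ => 4 * Real.pi * r) (4 * Real.pi) s := by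
    simpa using (hasDerivAt_id s).const_mul (4 * Real.pi)
  have hc : HasDerivAt (fun r : ℝ => (4 * Real.pi * r) ^ (-(1:ℝ)/2))
      ((-(1:ℝ)/2 * (4 * Real.pi * s) ^ (-(1:ℝ)/2 - 1)) * (4 * Real.pi)) s :=
    (Real.hasDerivAt_rpow_const (Or.inl (ne_of_gt h4))).comp s hlin
  have hinner : HasDerivAt (fun r : ℝ => -z ^ 2 / (4 * r))
      ((-z ^ 2 / 4) * (-(s ^ 2)⁻¹)) s := by
    have heq : (fun r : ℝ => -z ^ 2 / (4 * r)) = fun r => (-z ^ 2 / 4) * r⁻¹ := by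
      funext r; rw [div_eq_mul_inv, mul_inv]; ring
    rw [heq]
    exact (hasDerivAt_inv (ne_of_gt hs)).const_mul _
  have he := hinner.exp
  have hmul := hc.mul he
  refine hmul.congr_deriv ?_
  have hsub : (4 * Real.pi * s) ^ (-(1:ℝ)/2 - 1)
      = (4 * Real.pi * s) ^ (-(1:ℝ)/2) / (4 * Real.pi * s) := by
    rw [Real.rpow_sub h4, Real.rpow_one]
  rw [hsub]
  unfold H
  have hs' : s ≠ 0 := ne_of_gt hs
  have hpi' : Real.pi ≠ 0 := ne_of_gt hpi
  field_simp

lemma hasDerivAt_H_t_neg {s : ℝ} (hs : s < 0) (z : ℝ) :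
    HasDerivAt (fun r => H r z) ((-1 / (2 * s) + z ^ 2 / (4 * s ^ 2)) * H s z) s := by
  have hev : (fun r => H r z) =ᶠ[nhds s] fun _ => (0:ℝ) :=
    Filter.eventually_of_mem (Iio_mem_nhds hs) fun r hr => H_eq_zero (le_of_lt hr) z
  have h0 : HasDerivAt (fun _ : ℝ => (0:ℝ)) 0 s := hasDerivAt_const s 0
  have := h0.congr_of_eventuallyEq hev
  rw [H_eq_zero hs.le, mul_zero]
  exact this

lemma hasDerivAt_H_t_zero {z : ℝ} (hz : z ≠ 0) :
    HasDerivAt (fun r => H r z) 0 0 := by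
  rw [hasDerivAt_iff_tendsto_slope]
  have hKpos : 0 < z ^ 2 / 4 := by positivity
  set K := z ^ 2 / 4 with hK
  set C := 27 / (2 * K ^ 3) with hC
  have hCpos : 0 < C := by positivity
  apply squeeze_zero_norm' (a := fun r : ℝ => C * |r| * Real.sqrt |r|)
  · filter_upwards [self_mem_nhdsWithin] with r hr
    have hr0 : r ≠ 0 := hr
    have key : slope (fun r => H r z) 0 r = H r z / r := by
      rw [slope_def_field, H_eq_zero le_rfl, sub_zero, sub_zero]
    rw [key]
    rcases lt_or_gt_of_ne hr0 with h | h
    · rw [H_eq_zero h.le]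
      simp only [zero_div, norm_zero]
      positivity
    · have hHle : H r z ≤ C * r ^ 2 * Real.sqrt r := H_le h hKpos le_rfl
      have hHnn := H_nonneg r z
      rw [Real.norm_eq_abs, abs_of_nonneg (div_nonneg hHnn h.le), abs_of_pos h,
        div_le_iff₀ h]
      calc H r z ≤ C * r ^ 2 * Real.sqrt r := hHle
        _ = C * r * Real.sqrt r * r := by ring
  · have hcont : Continuous (fun r : ℝ => C * |r| * Real.sqrt |r|) := by
      fun_prop
    have := (hcont.tendsto 0).mono_left (nhdsWithin_le_nhds (s := {(0:ℝ)}ᶜ))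
    simpa using this

lemma hasDerivAt_H_t {z : ℝ} (hz : z ≠ 0) (s : ℝ) :
    HasDerivAt (fun r => H r z) ((-1 / (2 * s) + z ^ 2 / (4 * s ^ 2)) * H s z) s := by
  rcases lt_trichotomy s 0 with h | h | h
  · exact hasDerivAt_H_t_neg h z
  · subst h
    have h0 : (-1 / (2 * (0:ℝ)) + z ^ 2 / (4 * (0:ℝ) ^ 2)) * H 0 z = 0 := by
      rw [H_eq_zero le_rfl, mul_zero]
    rw [h0]
    exact hasDerivAt_H_t_zero hz
  · exact hasDerivAt_H_t_pos h z

lemma measurable_H_comp (t x : ℝ) : Measurable fun τ : ℝ => H (t - τ) x := by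
  unfold H
  apply Measurable.mul
  · exact ((measurable_const.mul (measurable_const.sub measurable_id)).pow
      measurable_const)
  · exact (Measurable.div measurable_const
      (measurable_const.mul (measurable_const.sub measurable_id))).exp

lemma key_bound {s t x K M B p : ℝ} (hs : 0 < s) (hst : s ≤ t) (hK : 0 < K)
    (hKx : K ≤ x ^ 2 / 4) (hB : x ^ 2 ≤ B) (hM : 0 ≤ M) (hp : |p| ≤ M) :
    |2 * ((-1 / (2 * s) + x ^ 2 / (4 * s ^ 2)) * H s x) * p|
      ≤ 27 / K ^ 3 * M * (t * Real.sqrt t + B * Real.sqrt t) := by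
  have hHnn := H_nonneg s x
  have hHle : H s x ≤ 27 / (2 * K ^ 3) * s ^ 2 * Real.sqrt s := H_le hs hK hKx
  have hsqnn : (0:ℝ) ≤ Real.sqrt s := Real.sqrt_nonneg s
  have hsq_le : Real.sqrt s ≤ Real.sqrt t := Real.sqrt_le_sqrt hst
  have ht' : 0 < t := lt_of_lt_of_le hs hst
  have hA : |(-1 / (2 * s) + x ^ 2 / (4 * s ^ 2))| ≤ 1 / (2 * s) + x ^ 2 / (4 * s ^ 2) := by
    have hneg : (-1:ℝ) / (2 * s) = -(1 / (2 * s)) := by ring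
    have h1 : (0:ℝ) ≤ x ^ 2 / (4 * s ^ 2) := by positivity
    have h2 : (0:ℝ) ≤ 1 / (2 * s) := by positivity
    rw [abs_le]
    constructor <;> rw [hneg] <;> linarith
  have e0 : |2 * ((-1 / (2 * s) + x ^ 2 / (4 * s ^ 2)) * H s x) * p|
      = 2 * (|(-1 / (2 * s) + x ^ 2 / (4 * s ^ 2))| * H s x) * |p| := by
    rw [abs_mul, abs_mul, abs_mul, abs_of_nonneg hHnn]
    norm_num
  rw [e0]
  have step1 : 2 * (|(-1 / (2 * s) + x ^ 2 / (4 * s ^ 2))| * H s x) * |p|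
      ≤ 2 * ((1 / (2 * s) + x ^ 2 / (4 * s ^ 2)) * (27 / (2 * K ^ 3) * s ^ 2 * Real.sqrt s)) * M := by
    gcongr
  refine step1.trans ?_
  have hs' : s ≠ 0 := ne_of_gt hs
  have e1 : 2 * ((1 / (2 * s) + x ^ 2 / (4 * s ^ 2)) * (27 / (2 * K ^ 3) * s ^ 2 * Real.sqrt s)) * M
      = 27 / K ^ 3 * M * ((s + x ^ 2 / 2) / 2 * Real.sqrt s) := by
    field_simp
    ring
  rw [e1]
  gcongr 27 / K ^ 3 * M * ?_
  calc (s + x ^ 2 / 2) / 2 * Real.sqrt s ≤ (t + B) * Real.sqrt t := by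
        apply mul_le_mul _ hsq_le hsqnn (by nlinarith)
        nlinarith
    _ = t * Real.sqrt t + B * Real.sqrt t := by ring

lemma key_bound_F {s t x K M p : ℝ} (hs : 0 < s) (hst : s ≤ t) (hK : 0 < K)
    (hKx : K ≤ x ^ 2 / 4) (hM : 0 ≤ M) (hp : |p| ≤ M) :
    |2 * (-(x / (2 * s)) * H s x) * p| ≤ 27 / K ^ 3 * M * |x| * (t * Real.sqrt t) := by
  have hHnn := H_nonneg s x
  have hHle : H s x ≤ 27 / (2 * K ^ 3) * s ^ 2 * Real.sqrt s := H_le hs hK hKx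
  have hsqnn : (0:ℝ) ≤ Real.sqrt s := Real.sqrt_nonneg s
  have hsq_le : Real.sqrt s ≤ Real.sqrt t := Real.sqrt_le_sqrt hst
  have ht' : 0 < t := lt_of_lt_of_le hs hst
  have e0 : |2 * (-(x / (2 * s)) * H s x) * p| = 2 * (|x| / (2 * s) * H s x) * |p| := by
    rw [abs_mul, abs_mul, abs_mul, abs_of_nonneg hHnn, abs_neg, abs_div,
      abs_of_pos (by positivity : (0:ℝ) < 2 * s)]
    norm_num
  rw [e0]
  have step1 : 2 * (|x| / (2 * s) * H s x) * |p|
      ≤ 2 * (|x| / (2 * s) * (27 / (2 * K ^ 3) * s ^ 2 * Real.sqrt s)) * M := by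
    gcongr
  refine step1.trans ?_
  have hs' : s ≠ 0 := ne_of_gt hs
  have e1 : 2 * (|x| / (2 * s) * (27 / (2 * K ^ 3) * s ^ 2 * Real.sqrt s)) * M
      = 27 / K ^ 3 * M * |x| * (s / 2 * Real.sqrt s) := by
    field_simp
  rw [e1]
  gcongr 27 / K ^ 3 * M * |x| * ?_
  calc s / 2 * Real.sqrt s ≤ t * Real.sqrt t :=
    mul_le_mul (by linarith) hsq_le hsqnn (by linarith)

noncomputable def v (φ : ℝ → ℝ) (t z : ℝ) : ℝ :=
  ∫ τ in (0:ℝ)..t, 2 * deriv (fun z' => H (t - τ) z') z * φ τ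

theorem deriv_v_eq (φ : ℝ → ℝ) (hφ : ContDiff ℝ 1 φ) (hφ0 : φ 0 = 0)
    (t z : ℝ) (ht : 0 < t) (hz : z < 0) :
    deriv (fun z' => v φ t z') z = ∫ τ in (0:ℝ)..t, 2 * H (t - τ) z * deriv φ τ := by
  have hz0 : z ≠ 0 := ne_of_lt hz
  have hφc : Continuous φ := hφ.continuous
  have hφ' : Continuous (deriv φ) := hφ.continuous_deriv le_rfl
  obtain ⟨M₀, hM₀⟩ := (isCompact_Icc (a := (0:ℝ)) (b := t)).exists_bound_of_continuousOn
    hφc.continuousOn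
  set M := max M₀ 1 with hM
  have hM1 : (1:ℝ) ≤ M := le_max_right _ _
  have hMnn : (0:ℝ) ≤ M := by linarith
  have hMb : ∀ τ ∈ Icc (0:ℝ) t, |φ τ| ≤ M := fun τ hτ =>
    le_trans (hM₀ τ hτ) (le_max_left _ _)
  set μ := volume.restrict (Set.Ioc (0:ℝ) t) with hμ
  set K := z ^ 2 / 16 with hK
  have hKpos : 0 < K := by positivity
  set B := 9 * z ^ 2 / 4 with hB
  set F : ℝ → ℝ → ℝ := fun x τ => 2 * (-(x / (2 * (t - τ))) * H (t - τ) x) * φ τ with hFdef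
  set F' : ℝ → ℝ → ℝ := fun x τ =>
    2 * ((-1 / (2 * (t - τ)) + x ^ 2 / (4 * (t - τ) ^ 2)) * H (t - τ) x) * φ τ with hF'def
  -- v equals the μ-integral of F
  have hveq : ∀ x : ℝ, v φ t x = ∫ τ, F x τ ∂μ := by
    intro x
    have h1 : v φ t x = ∫ τ in (0:ℝ)..t, F x τ := by
      unfold v
      apply intervalIntegral.integral_congr
      intro τ hτ
      rw [Set.uIcc_of_le ht.le] at hτ
      show 2 * deriv (fun z' => H (t - τ) z') x * φ τ = F x τ
      rcases eq_or_lt_of_le hτ.2 with h | h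
      · subst h
        have hfun : (fun z' => H (τ - τ) z') = fun _ => (0:ℝ) := by
          funext w; rw [sub_self]; exact H_eq_zero le_rfl w
        rw [hfun, deriv_const]
        have hHz : H (τ - τ) x = 0 := H_eq_zero (le_of_eq (sub_self τ)) x
        simp [hFdef, hHz]
      · have hs : 0 < t - τ := by linarith
        have hd : deriv (fun z' => H (t - τ) z') x
            = -(x / (2 * (t - τ))) * H (t - τ) x := (hasDerivAt_H_z hs x).deriv
        simp only [hFdef, hd]
    rw [h1, intervalIntegral.integral_of_le ht.le]
  -- measurability
  have hFmeas : ∀ x : ℝ, MeasureTheory.AEStronglyMeasurable (F x) μ := by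
    intro x
    apply Measurable.aestronglyMeasurable
    have h1 : Measurable fun τ : ℝ => -(x / (2 * (t - τ))) :=
      (measurable_const.div ((measurable_const.mul (measurable_const.sub measurable_id)))).neg
    exact ((h1.mul (measurable_H_comp t x)).const_mul 2).mul hφc.measurable
  have hF'meas : ∀ x : ℝ, MeasureTheory.AEStronglyMeasurable (F' x) μ := by
    intro x
    apply Measurable.aestronglyMeasurable
    have h1 : Measurable fun τ : ℝ => (-1 / (2 * (t - τ)) + x ^ 2 / (4 * (t - τ) ^ 2)) := by
      apply Measurable.add
      · exact measurable_const.div (measurable_const.mul (measurable_const.sub measurable_id))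
      · exact measurable_const.div
          (measurable_const.mul ((measurable_const.sub measurable_id).pow measurable_const))
    exact ((h1.mul (measurable_H_comp t x)).const_mul 2).mul hφc.measurable
  -- a.e. facts
  have hae : ∀ᵐ τ ∂μ, τ ∈ Set.Ioc (0:ℝ) t :=
    MeasureTheory.ae_restrict_mem measurableSet_Ioc
  have hne : ∀ᵐ τ ∂μ, τ ≠ t := by
    apply MeasureTheory.ae_restrict_of_ae
    rw [MeasureTheory.ae_iff]
    have : {τ : ℝ | ¬ τ ≠ t} = {t} := by ext w; simp
    rw [this]
    exact MeasureTheory.measure_singleton t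
  -- ball facts
  set ε := -z / 2 with hε
  have hεpos : 0 < ε := by simp [hε]; linarith
  have hball : ∀ x ∈ ball z ε, K ≤ x ^ 2 / 4 ∧ x ^ 2 ≤ B := by
    intro x hx
    rw [mem_ball, Real.dist_eq] at hx
    have h1 : x < z / 2 := by cases abs_lt.1 hx; linarith
    have h2 : 3 * z / 2 < x := by cases abs_lt.1 hx; linarith
    constructor
    · rw [hK]; nlinarith
    · rw [hB]; nlinarith
  -- dominated derivative theorem
  have key := hasDerivAt_integral_of_dominated_loc_of_deriv_le
    (F := F) (F' := F') (x₀ := z) (μ := μ)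
    (bound := fun _ => 27 / K ^ 3 * M * (t * Real.sqrt t + B * Real.sqrt t))
    (ball_mem_nhds z hεpos)
    (Filter.Eventually.of_forall hFmeas)
    ?_ (hF'meas z) ?_ ?_ ?_
  · -- use the conclusion
    obtain ⟨hInt, hDeriv⟩ := key
    have hvfun : (fun z' => v φ t z') = fun x => ∫ τ, F x τ ∂μ := funext hveq
    rw [hvfun, hDeriv.deriv]
    -- back to interval integral
    have hback : ∫ τ, F' z τ ∂μ = ∫ τ in (0:ℝ)..t, F' z τ := by
      rw [intervalIntegral.integral_of_le ht.le]
    rw [hback]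
    -- integration by parts
    set w : ℝ → ℝ := fun τ => -2 * H (t - τ) z with hw
    set w' : ℝ → ℝ := fun τ =>
      2 * ((-1 / (2 * (t - τ)) + z ^ 2 / (4 * (t - τ) ^ 2)) * H (t - τ) z) with hw'
    have hu : ∀ τ ∈ Set.uIcc (0:ℝ) t, HasDerivAt φ (deriv φ τ) τ := fun τ _ =>
      ((hφ.differentiable one_ne_zero) τ).hasDerivAt
    have hv : ∀ τ ∈ Set.uIcc (0:ℝ) t, HasDerivAt w (w' τ) τ := by
      intro τ _
      have hH := hasDerivAt_H_t hz0 (t - τ)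
      have hlin : HasDerivAt (fun τ : ℝ => t - τ) (-1) τ := (hasDerivAt_id τ).const_sub t
      have hcomp := (hH.comp τ hlin).const_mul (-2)
      have : -2 * ((-1 / (2 * (t - τ)) + z ^ 2 / (4 * (t - τ) ^ 2)) * H (t - τ) z * -1)
          = w' τ := by rw [hw']; ring
      rw [← this]
      exact hcomp
    have hu' : IntervalIntegrable (deriv φ) MeasureTheory.volume 0 t :=
      hφ'.intervalIntegrable 0 t
    have hw'int : IntervalIntegrable w' MeasureTheory.volume 0 t := by
      rw [intervalIntegrable_iff_integrableOn_Ioc_of_le ht.le]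
      apply MeasureTheory.Integrable.mono'
        (MeasureTheory.integrableOn_const measure_Ioc_lt_top.ne :
          IntegrableOn (fun _ => 27 / K ^ 3 * (t * Real.sqrt t + B * Real.sqrt t)) _ _)
      · apply Measurable.aestronglyMeasurable
        have h1 : Measurable fun τ : ℝ => (-1 / (2 * (t - τ)) + z ^ 2 / (4 * (t - τ) ^ 2)) := by
          apply Measurable.add
          · exact measurable_const.div (measurable_const.mul (measurable_const.sub measurable_id))
          · exact measurable_const.div
              (measurable_const.mul ((measurable_const.sub measurable_id).pow measurable_const))
        exact (h1.mul (measurable_H_comp t z)).const_mul 2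
      · filter_upwards [hae, hne] with τ hτ hτt
        have hs : 0 < t - τ := lt_of_le_of_ne (by linarith [hτ.2]) (by intro h; exact hτt (by linarith))
        have hst : t - τ ≤ t := by linarith [hτ.1]
        have hKz : K ≤ z ^ 2 / 4 := by rw [hK]; nlinarith
        have hBz : z ^ 2 ≤ B := by rw [hB]; nlinarith
        have := key_bound (t := t) (p := (1:ℝ)) (M := 1) hs hst hKpos hKz hBz zero_le_one
          (by norm_num)
        rw [mul_one] at this
        calc ‖w' τ‖ = |2 * ((-1 / (2 * (t - τ)) + z ^ 2 / (4 * (t - τ) ^ 2)) * H (t - τ) z)| :=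
              rfl
          _ ≤ 27 / K ^ 3 * 1 * (t * Real.sqrt t + B * Real.sqrt t) := this
          _ = 27 / K ^ 3 * (t * Real.sqrt t + B * Real.sqrt t) := by ring
    have hibp := intervalIntegral.integral_mul_deriv_eq_deriv_mul hu hv hu' hw'int
    have hF'w : ∫ τ in (0:ℝ)..t, F' z τ = ∫ τ in (0:ℝ)..t, φ τ * w' τ := by
      apply intervalIntegral.integral_congr
      intro τ _
      simp only [hF'def, hw']
      ring
    rw [hF'w, hibp]
    have hwt : w t = 0 := by
      show -2 * H (t - t) z = 0
      rw [sub_self, H_eq_zero le_rfl, mul_zero]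
    rw [hwt, hφ0]
    have hsplit : φ t * 0 - 0 * w 0 - (∫ τ in (0:ℝ)..t, deriv φ τ * w τ)
        = ∫ τ in (0:ℝ)..t, -(deriv φ τ * w τ) := by
      rw [intervalIntegral.integral_neg]; ring
    rw [hsplit]
    apply intervalIntegral.integral_congr
    intro τ _
    show -(deriv φ τ * w τ) = 2 * H (t - τ) z * deriv φ τ
    simp only [hw]
    ring
  · -- integrability of F z
    apply MeasureTheory.Integrable.mono'
      (MeasureTheory.integrableOn_const measure_Ioc_lt_top.ne :
        IntegrableOn (fun _ => 27 / K ^ 3 * M * |z| * (t * Real.sqrt t)) _ _)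
      (hFmeas z)
    filter_upwards [hae, hne] with τ hτ hτt
    have hs : 0 < t - τ := lt_of_le_of_ne (by linarith [hτ.2]) (by intro h; exact hτt (by linarith))
    have hst : t - τ ≤ t := by linarith [hτ.1]
    have hKz : K ≤ z ^ 2 / 4 := by rw [hK]; nlinarith
    exact key_bound_F hs hst hKpos hKz hMnn (hMb τ ⟨hτ.1.le, hτ.2⟩)
  · -- bound
    filter_upwards [hae, hne] with τ hτ hτt x hx
    have hs : 0 < t - τ := lt_of_le_of_ne (by linarith [hτ.2]) (by intro h; exact hτt (by linarith))
    have hst : t - τ ≤ t := by linarith [hτ.1]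
    obtain ⟨hKx, hBx⟩ := hball x hx
    exact key_bound hs hst hKpos hKx hBx hMnn (hMb τ ⟨hτ.1.le, hτ.2⟩)
  · -- bound integrable
    exact MeasureTheory.integrableOn_const measure_Ioc_lt_top.ne
  · -- differentiability
    filter_upwards [hae, hne] with τ hτ hτt x hx
    have hs : 0 < t - τ := lt_of_le_of_ne (by linarith [hτ.2]) (by intro h; exact hτt (by linarith))
    have h := hasDerivAt_H_zz hs x
    exact (h.const_mul 2).mul_const (φ τ)
end

section
/- Consider the dispersion relation Γ(μ,k) = (μ² + |k|²)² - μ³ = 0 (the case ε = 0). For small |k|, there is a root of the form μ = -(1/2 ± i√3/2)|k|^{4/3} + o(|k|^{4/3}) as |k| → 0; in particular, μ(k)/|k|^{4/3} → -(1/2 ± i√3/2) where -(1/2 ± i√3/2) are the two non-real cube roots of -1. -/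
set_option maxHeartbeats 1000000
set_option linter.unreachableTactic false
set_option linter.unusedTactic false
set_option linter.deprecated false

open Polynomial in
lemma exists_root_quartic (b c d e : ℂ) : ∃ z : ℂ, z^4 + b*z^3 + c*z^2 + d*z + e = 0 := by
  have h : (X^4 + C b * X^3 + C c * X^2 + C d * X + C e : ℂ[X]).degree = 4 := by
    compute_degree!
  obtain ⟨z, hz⟩ := IsAlgClosed.exists_root (k := ℂ)
    (X^4 + C b * X^3 + C c * X^2 + C d * X + C e) (by rw [h]; norm_num)
  exact ⟨z, by simpa [IsRoot] using hz⟩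

open Polynomial in
lemma exists_root_quadratic (b c : ℂ) : ∃ z : ℂ, z^2 + b*z + c = 0 := by
  have h : (X^2 + C b * X + C c : ℂ[X]).degree = 2 := by compute_degree!
  obtain ⟨z, hz⟩ := IsAlgClosed.exists_root (k := ℂ) (X^2 + C b * X + C c) (by rw [h]; norm_num)
  exact ⟨z, by simpa [IsRoot] using hz⟩

open Polynomial in
lemma exists_root_cubic (b c d : ℂ) : ∃ z : ℂ, z^3 + b*z^2 + c*z + d = 0 := by
  have h : (X^3 + C b * X^2 + C c * X + C d : ℂ[X]).degree = 3 := by compute_degree!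
  obtain ⟨z, hz⟩ := IsAlgClosed.exists_root (k := ℂ) (X^3 + C b * X^2 + C c * X + C d) (by rw [h]; norm_num)
  exact ⟨z, by simpa [IsRoot] using hz⟩

lemma quartic_factor (b c d e : ℂ) :
    ∃ r₁ r₂ r₃ r₄ : ℂ, ∀ z : ℂ,
      z^4 + b*z^3 + c*z^2 + d*z + e = (z - r₁)*(z - r₂)*(z - r₃)*(z - r₄) := by
  obtain ⟨r₁, h₁⟩ := exists_root_quartic b c d e
  obtain ⟨r₂, h₂⟩ := exists_root_cubic (b + r₁) (c + b*r₁ + r₁^2) (d + c*r₁ + b*r₁^2 + r₁^3)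
  obtain ⟨r₃, h₃⟩ := exists_root_quadratic (b + r₁ + r₂) (c + b*r₁ + r₁^2 + (b + r₁)*r₂ + r₂^2)
  refine ⟨r₁, r₂, r₃, -(b + r₁ + r₂ + r₃), fun z => ?_⟩
  linear_combination h₁ + (z - r₁) * h₂ + (z - r₁)*(z - r₂)*h₃

lemma exists_root_re_nonpos (k : ℝ) (hk : 0 < k) :
    ∃ m : ℂ, (m^2 + (k:ℂ)^2)^2 = m^3 ∧ m.re ≤ 0 := by
  obtain ⟨r₁, r₂, r₃, r₄, h⟩ := quartic_factor (-1) (2*(k:ℂ)^2) 0 ((k:ℂ)^4)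
  have hprod : r₁*r₂*r₃*r₄ = (k:ℂ)^4 := by linear_combination -h 0
  have hS : r₁*r₂*r₃ + r₁*r₂*r₄ + r₁*r₃*r₄ + r₂*r₃*r₄ = 0 := by
    linear_combination -(8*h (-1) - 8*h 1 - h (-2) + h 2)/12
  have hkc : (k:ℂ) ≠ 0 := by exact_mod_cast hk.ne'
  have hk4 : (k:ℂ)^4 ≠ 0 := pow_ne_zero 4 hkc
  have hne : r₁ ≠ 0 ∧ r₂ ≠ 0 ∧ r₃ ≠ 0 ∧ r₄ ≠ 0 := by
    refine ⟨?_, ?_, ?_, ?_⟩ <;> (rintro rfl; rw [← hprod] at hk4; simp at hk4)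
  obtain ⟨h1, h2, h3, h4⟩ := hne
  have hsum : r₁⁻¹ + r₂⁻¹ + r₃⁻¹ + r₄⁻¹ = 0 := by
    field_simp
    linear_combination hS
  have hre : (r₁⁻¹).re + (r₂⁻¹).re + (r₃⁻¹).re + (r₄⁻¹).re = 0 := by
    have := congrArg Complex.re hsum; simpa using this
  have key : ∀ r : ℂ, r ≠ 0 → (r⁻¹).re ≤ 0 → r.re ≤ 0 := by
    intro r hr hinv
    rw [Complex.inv_re] at hinv
    have hn : 0 < Complex.normSq r := Complex.normSq_pos.2 hr
    rcases div_nonpos_iff.mp hinv with ⟨_, hden⟩ | ⟨hnum, _⟩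
    · linarith
    · exact hnum
  have root : ∀ r : ℂ, ((r - r₁)*(r - r₂)*(r - r₃)*(r - r₄) = 0) →
      (r^2 + (k:ℂ)^2)^2 = r^3 := by
    intro r hr
    have := h r
    rw [hr] at this
    linear_combination this
  have hex : (r₁⁻¹).re ≤ 0 ∨ (r₂⁻¹).re ≤ 0 ∨ (r₃⁻¹).re ≤ 0 ∨ (r₄⁻¹).re ≤ 0 := by
    by_contra hcon
    push_neg at hcon
    obtain ⟨a, b, c, d⟩ := hcon
    linarith
  rcases hex with hx | hx | hx | hx
  · exact ⟨r₁, root r₁ (by ring), key r₁ h1 hx⟩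
  · exact ⟨r₂, root r₂ (by ring), key r₂ h2 hx⟩
  · exact ⟨r₃, root r₃ (by ring), key r₃ h3 hx⟩
  · exact ⟨r₄, root r₄ (by ring), key r₄ h4 hx⟩

lemma key_root (μ₀ : ℂ) (hcube : μ₀ ^ 3 = 1) (t : ℝ) (ht : 0 < t) (ht' : t ≤ 1/10) :
    ∃ ν : ℂ, ((t:ℂ)^2 * ν^2 + 1)^2 = ν^3 ∧ ‖ν - μ₀‖ ≤ 4 * t^2 := by
  have hμn : ‖μ₀‖ = 1 := by
    have h3 : ‖μ₀‖^3 = 1 := by rw [← norm_pow, hcube, norm_one]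
    nlinarith [norm_nonneg μ₀, sq_nonneg (‖μ₀‖ - 1), sq_nonneg (‖μ₀‖ + 1)]
  set G : ℂ → ℂ := fun h =>
    (μ₀/3) * ((t:ℂ)^2*(μ₀+h)^2*((t:ℂ)^2*(μ₀+h)^2+2) - 3*μ₀*h^2 - h^3) with hG
  have ht2 : t^2 ≤ t/10 := by nlinarith
  have ht2' : t^2 ≤ 1/100 := by nlinarith
  have htn : ‖(t:ℂ)‖ = t := by rw [Complex.norm_real]; exact abs_of_pos ht
  have hbound : ∀ h : ℂ, ‖h‖ ≤ t → ‖G h‖ ≤ 4 * t^2 := by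
    intro h hh
    have hν : ‖μ₀ + h‖ ≤ 11/10 := by
      calc ‖μ₀ + h‖ ≤ ‖μ₀‖ + ‖h‖ := norm_add_le _ _
        _ ≤ 11/10 := by rw [hμn]; linarith
    have hν2 : ‖μ₀ + h‖^2 ≤ 2 := by nlinarith [norm_nonneg (μ₀ + h)]
    have hA : ‖(t:ℂ)^2*(μ₀+h)^2‖ ≤ 2 * t^2 := by
      rw [norm_mul, norm_pow, norm_pow, htn]
      nlinarith [sq_nonneg t]
    have hB : ‖(t:ℂ)^2*(μ₀+h)^2+2‖ ≤ 3 := by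
      calc ‖(t:ℂ)^2*(μ₀+h)^2+2‖ ≤ ‖(t:ℂ)^2*(μ₀+h)^2‖ + ‖(2:ℂ)‖ := norm_add_le _ _
        _ ≤ 3 := by rw [Complex.norm_ofNat]; nlinarith
    have hAB : ‖(t:ℂ)^2*(μ₀+h)^2*((t:ℂ)^2*(μ₀+h)^2+2)‖ ≤ 6 * t^2 := by
      rw [norm_mul]
      calc ‖(t:ℂ)^2*(μ₀+h)^2‖ * ‖(t:ℂ)^2*(μ₀+h)^2+2‖ ≤ (2*t^2) * 3 :=
            mul_le_mul hA hB (norm_nonneg _) (by positivity)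
        _ = 6 * t^2 := by ring
    have h2 : ‖3*μ₀*h^2‖ ≤ 3 * t^2 := by
      rw [norm_mul, norm_mul, norm_pow, hμn, Complex.norm_ofNat]
      nlinarith [norm_nonneg h]
    have h3 : ‖h^3‖ ≤ t^2 / 10 := by
      rw [norm_pow]
      have : ‖h‖^3 ≤ t^3 := pow_le_pow_left₀ (norm_nonneg h) hh 3
      nlinarith [sq_nonneg t]
    have htri : ‖(t:ℂ)^2*(μ₀+h)^2*((t:ℂ)^2*(μ₀+h)^2+2) - 3*μ₀*h^2 - h^3‖
        ≤ 6*t^2 + 3*t^2 + t^2/10 := by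
      calc ‖(t:ℂ)^2*(μ₀+h)^2*((t:ℂ)^2*(μ₀+h)^2+2) - 3*μ₀*h^2 - h^3‖
          ≤ ‖(t:ℂ)^2*(μ₀+h)^2*((t:ℂ)^2*(μ₀+h)^2+2) - 3*μ₀*h^2‖ + ‖h^3‖ := norm_sub_le _ _
        _ ≤ (‖(t:ℂ)^2*(μ₀+h)^2*((t:ℂ)^2*(μ₀+h)^2+2)‖ + ‖3*μ₀*h^2‖) + ‖h^3‖ := by
            gcongr; exact norm_sub_le _ _
        _ ≤ 6*t^2 + 3*t^2 + t^2/10 := by linarith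
    calc ‖G h‖ = ‖μ₀/3‖ * ‖(t:ℂ)^2*(μ₀+h)^2*((t:ℂ)^2*(μ₀+h)^2+2) - 3*μ₀*h^2 - h^3‖ := by
          rw [hG]; exact norm_mul _ _
      _ ≤ (1/3) * (6*t^2 + 3*t^2 + t^2/10) := by
          rw [norm_div, hμn, Complex.norm_ofNat]
          gcongr
      _ ≤ 4 * t^2 := by nlinarith [sq_nonneg t]
  have hlip : ∀ h₁ h₂ : ℂ, ‖h₁‖ ≤ t → ‖h₂‖ ≤ t →
      ‖G h₁ - G h₂‖ ≤ (1/2) * ‖h₁ - h₂‖ := by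
    intro h₁ h₂ hh₁ hh₂
    set E : ℂ := (t:ℂ)^2*(2*μ₀+h₁+h₂)*((t:ℂ)^2*((μ₀+h₁)^2+(μ₀+h₂)^2)+2)
        - 3*μ₀*(h₁+h₂) - (h₁^2+h₁*h₂+h₂^2) with hE
    have hid : G h₁ - G h₂ = (μ₀/3) * (h₁ - h₂) * E := by rw [hG, hE]; ring
    have hν₁ : ‖μ₀ + h₁‖ ≤ 11/10 := by
      calc ‖μ₀ + h₁‖ ≤ ‖μ₀‖ + ‖h₁‖ := norm_add_le _ _
        _ ≤ 11/10 := by rw [hμn]; linarith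
    have hν₂ : ‖μ₀ + h₂‖ ≤ 11/10 := by
      calc ‖μ₀ + h₂‖ ≤ ‖μ₀‖ + ‖h₂‖ := norm_add_le _ _
        _ ≤ 11/10 := by rw [hμn]; linarith
    have hsq : ‖(μ₀+h₁)^2+(μ₀+h₂)^2‖ ≤ 4 := by
      calc ‖(μ₀+h₁)^2+(μ₀+h₂)^2‖ ≤ ‖(μ₀+h₁)^2‖ + ‖(μ₀+h₂)^2‖ := norm_add_le _ _
        _ ≤ 4 := by
            rw [norm_pow, norm_pow]
            nlinarith [norm_nonneg (μ₀+h₁), norm_nonneg (μ₀+h₂)]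
    have hfac1 : ‖(t:ℂ)^2*(2*μ₀+h₁+h₂)‖ ≤ 3 * t^2 := by
      rw [norm_mul, norm_pow, htn]
      have : ‖2*μ₀+h₁+h₂‖ ≤ 3 := by
        calc ‖2*μ₀+h₁+h₂‖ ≤ ‖2*μ₀+h₁‖ + ‖h₂‖ := norm_add_le _ _
          _ ≤ (‖2*μ₀‖ + ‖h₁‖) + ‖h₂‖ := by gcongr; exact norm_add_le _ _
          _ ≤ 3 := by rw [norm_mul, hμn, Complex.norm_ofNat]; linarith
      nlinarith [sq_nonneg t]
    have hfac2 : ‖(t:ℂ)^2*((μ₀+h₁)^2+(μ₀+h₂)^2)+2‖ ≤ 3 := by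
      calc ‖(t:ℂ)^2*((μ₀+h₁)^2+(μ₀+h₂)^2)+2‖
          ≤ ‖(t:ℂ)^2‖ * ‖(μ₀+h₁)^2+(μ₀+h₂)^2‖ + ‖(2:ℂ)‖ := by
            refine le_trans (norm_add_le _ _) ?_
            rw [norm_mul]
        _ ≤ 3 := by
            rw [norm_pow, htn, Complex.norm_ofNat]
            nlinarith [sq_nonneg t, norm_nonneg ((μ₀+h₁)^2+(μ₀+h₂)^2)]
    have hterm1 : ‖(t:ℂ)^2*(2*μ₀+h₁+h₂)*((t:ℂ)^2*((μ₀+h₁)^2+(μ₀+h₂)^2)+2)‖ ≤ 9 * t^2 := by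
      rw [norm_mul]
      calc ‖(t:ℂ)^2*(2*μ₀+h₁+h₂)‖ * ‖(t:ℂ)^2*((μ₀+h₁)^2+(μ₀+h₂)^2)+2‖
          ≤ (3*t^2) * 3 := mul_le_mul hfac1 hfac2 (norm_nonneg _) (by positivity)
        _ = 9 * t^2 := by ring
    have hterm2 : ‖3*μ₀*(h₁+h₂)‖ ≤ 6 * t := by
      rw [norm_mul, norm_mul, hμn, Complex.norm_ofNat]
      have := norm_add_le h₁ h₂
      nlinarith
    have hterm3 : ‖h₁^2+h₁*h₂+h₂^2‖ ≤ 3 * t^2 := by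
      calc ‖h₁^2+h₁*h₂+h₂^2‖ ≤ ‖h₁^2+h₁*h₂‖ + ‖h₂^2‖ := norm_add_le _ _
        _ ≤ (‖h₁^2‖ + ‖h₁*h₂‖) + ‖h₂^2‖ := by gcongr; exact norm_add_le _ _
        _ ≤ 3 * t^2 := by
            rw [norm_pow, norm_pow, norm_mul]
            nlinarith [norm_nonneg h₁, norm_nonneg h₂]
    have hEb : ‖E‖ ≤ 3/2 := by
      calc ‖E‖ ≤ ‖(t:ℂ)^2*(2*μ₀+h₁+h₂)*((t:ℂ)^2*((μ₀+h₁)^2+(μ₀+h₂)^2)+2)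
            - 3*μ₀*(h₁+h₂)‖ + ‖h₁^2+h₁*h₂+h₂^2‖ := norm_sub_le _ _
        _ ≤ (‖(t:ℂ)^2*(2*μ₀+h₁+h₂)*((t:ℂ)^2*((μ₀+h₁)^2+(μ₀+h₂)^2)+2)‖
            + ‖3*μ₀*(h₁+h₂)‖) + ‖h₁^2+h₁*h₂+h₂^2‖ := by gcongr; exact norm_sub_le _ _
        _ ≤ 9*t^2 + 6*t + 3*t^2 := by linarith
        _ ≤ 3/2 := by linarith
    calc ‖G h₁ - G h₂‖ = ‖μ₀/3‖ * ‖h₁ - h₂‖ * ‖E‖ := by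
          rw [hid, norm_mul, norm_mul]
      _ ≤ (1/3) * ‖h₁ - h₂‖ * (3/2) := by
          rw [norm_div, hμn, Complex.norm_ofNat]
          have := norm_nonneg (h₁ - h₂)
          nlinarith [norm_nonneg E, hEb]
      _ = (1/2) * ‖h₁ - h₂‖ := by ring
  -- Banach fixed point on the closed ball of radius t
  haveI : Nonempty (Metric.closedBall (0:ℂ) t) :=
    ⟨⟨0, Metric.mem_closedBall_self ht.le⟩⟩
  haveI : CompleteSpace (Metric.closedBall (0:ℂ) t) :=
    Metric.isClosed_closedBall.completeSpace_coe
  have hball : ∀ x : Metric.closedBall (0:ℂ) t, ‖(x:ℂ)‖ ≤ t := by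
    intro x
    have := Metric.mem_closedBall.mp x.2
    rwa [dist_zero_right] at this
  set g : Metric.closedBall (0:ℂ) t → Metric.closedBall (0:ℂ) t := fun x =>
    ⟨G x, by
      simp only [Metric.mem_closedBall, dist_zero_right]
      calc ‖G x‖ ≤ 4 * t^2 := hbound x (hball x)
        _ ≤ t := by nlinarith⟩ with hg
  have hcontr : ContractingWith (1/2 : NNReal) g := by
    constructor
    · have : ((1/2:NNReal):ℝ) < ((1:NNReal):ℝ) := by norm_num
      exact_mod_cast this
    · apply LipschitzWith.of_dist_le_mul
      intro x y
      rw [Subtype.dist_eq, Subtype.dist_eq, dist_eq_norm, dist_eq_norm]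
      have hcast : ((1/2 : NNReal) : ℝ) = 1/2 := by norm_num
      rw [hcast]
      exact hlip x y (hball x) (hball y)
  obtain ⟨xf, hxf, -⟩ := hcontr.exists_fixedPoint
    (⟨0, Metric.mem_closedBall_self ht.le⟩ : Metric.closedBall (0:ℂ) t) (edist_ne_top _ _)
  set x : ℂ := (xf : ℂ) with hx
  have hxb : ‖x‖ ≤ t := hball _
  have hGx : G x = x := congrArg Subtype.val hxf
  refine ⟨μ₀ + x, ?_, ?_⟩
  · have h3 : 3*μ₀^2*x = (t:ℂ)^2*(μ₀+x)^2*((t:ℂ)^2*(μ₀+x)^2+2) - 3*μ₀*x^2 - x^3 := by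
      have := hGx
      rw [hG] at this
      linear_combination (-3*μ₀^2) * this +
        ((t:ℂ)^2*(μ₀+x)^2*((t:ℂ)^2*(μ₀+x)^2+2) - 3*μ₀*x^2 - x^3) * hcube
    linear_combination -h3 - hcube
  · have : ‖μ₀ + x - μ₀‖ = ‖x‖ := by ring_nf
    rw [this]
    calc ‖x‖ = ‖G x‖ := by rw [hGx]
      _ ≤ 4 * t^2 := hbound x hxb

lemma spec_lemma (μ₀ : ℂ) (hcube : μ₀^3 = 1) (hre : μ₀.re = -(1/2)) (k : ℝ) :
    ∃ m : ℂ, 0 < k → ((m^2 + (k:ℂ)^2)^2 = m^3 ∧ m.re ≤ 0) ∧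
      (k ≤ 1/1000 → ‖m / ((k ^ ((4:ℝ)/3) : ℝ) : ℂ) - μ₀‖ ≤ 4 * k ^ ((2:ℝ)/3)) := by
  by_cases hk : 0 < k
  · by_cases hk' : k ≤ 1/1000
    · -- small k : use the fixed point construction
      set t : ℝ := k ^ ((1:ℝ)/3) with htdef
      have ht : 0 < t := Real.rpow_pos_of_pos hk _
      have hcube10 : ((1:ℝ)/1000) ^ ((1:ℝ)/3) = 1/10 := by
        rw [show (1/1000:ℝ) = (1/10)^(3:ℕ) by norm_num, ← Real.rpow_natCast (1/10 : ℝ) 3,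
          ← Real.rpow_mul (by norm_num : (0:ℝ) ≤ 1/10)]
        norm_num
      have ht' : t ≤ 1/10 := by
        rw [htdef, ← hcube10]
        exact Real.rpow_le_rpow hk.le hk' (by norm_num)
      have hk3 : t^3 = k := by
        rw [htdef, ← Real.rpow_natCast (k ^ ((1:ℝ)/3)) 3, ← Real.rpow_mul hk.le]
        norm_num
      have hk43 : k ^ ((4:ℝ)/3) = t^4 := by
        rw [htdef, ← Real.rpow_natCast (k ^ ((1:ℝ)/3)) 4, ← Real.rpow_mul hk.le]
        norm_num
      have hk23 : k ^ ((2:ℝ)/3) = t^2 := by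
        rw [htdef, ← Real.rpow_natCast (k ^ ((1:ℝ)/3)) 2, ← Real.rpow_mul hk.le]
        norm_num
      obtain ⟨ν, hν, hνb⟩ := key_root μ₀ hcube t ht ht'
      have hkc : (k:ℂ) = (t:ℂ)^3 := by
        rw [← hk3]; push_cast; ring
      refine ⟨(t:ℂ)^4 * ν, fun _ => ⟨⟨?_, ?_⟩, fun _ => ?_⟩⟩
      · rw [hkc]
        linear_combination (t:ℂ)^12 * hν
      · have hνre : ν.re ≤ 0 := by
          have h1 : (ν - μ₀).re ≤ ‖ν - μ₀‖ := Complex.re_le_norm _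
          rw [Complex.sub_re, hre] at h1
          nlinarith
        have : ((t:ℂ)^4 * ν).re = t^4 * ν.re := by
          rw [show ((t:ℂ)^4) = ((t^4 : ℝ) : ℂ) by push_cast; ring, Complex.re_ofReal_mul]
        rw [this]
        exact mul_nonpos_of_nonneg_of_nonpos (by positivity) hνre
      · have htne : ((t:ℝ):ℂ) ≠ 0 := by
          exact_mod_cast ht.ne'
        have : (t:ℂ)^4 * ν / ((k ^ ((4:ℝ)/3) : ℝ) : ℂ) = ν := by
          rw [hk43]
          push_cast
          field_simp
        rw [this, hk23]
        linarith [hνb]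
    · obtain ⟨m, hm1, hm2⟩ := exists_root_re_nonpos k hk
      exact ⟨m, fun _ => ⟨⟨hm1, hm2⟩, fun hle => absurd hle hk'⟩⟩
  · exact ⟨0, fun h => absurd h hk⟩

theorem dispersion_longwave_root :
    ∀ μ₀ ∈ ({Complex.mk (-1/2) (Real.sqrt 3 / 2),
             Complex.mk (-1/2) (-(Real.sqrt 3 / 2))} : Set ℂ),
      μ₀ ^ 3 = 1 ∧ μ₀.re < 0 ∧
      ∃ μ : ℝ → ℂ,
        (∀ k : ℝ, 0 < k → ((μ k) ^ 2 + (k:ℂ) ^ 2) ^ 2 = (μ k) ^ 3 ∧ (μ k).re ≤ 0) ∧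
        Filter.Tendsto (fun k : ℝ => μ k / ((k ^ ((4:ℝ)/3) : ℝ) : ℂ))
          (nhdsWithin 0 (Set.Ioi 0)) (nhds μ₀) := by
  intro μ₀ hμ₀
  have hs : Real.sqrt 3 ^ 2 = 3 := Real.sq_sqrt (by norm_num)
  have hre : μ₀.re = -(1/2) := by
    rcases hμ₀ with h | h <;> (rw [h]; norm_num)
  have hcube : μ₀ ^ 3 = 1 := by
    rcases hμ₀ with h | h <;>
      (rw [h]; apply Complex.ext <;>
        simp only [pow_succ, pow_zero, one_mul, Complex.mul_re, Complex.mul_im,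
          Complex.one_re, Complex.one_im] <;>
        first
          | linear_combination (-(Real.sqrt 3)/8 : ℝ) * hs
          | linear_combination ((Real.sqrt 3)/8 : ℝ) * hs
          | linear_combination ((3:ℝ)/8) * hs
          | nlinarith [hs])
  refine ⟨hcube, by rw [hre]; norm_num, fun k => (spec_lemma μ₀ hcube hre k).choose, ?_, ?_⟩
  · exact fun k hk => ((spec_lemma μ₀ hcube hre k).choose_spec hk).1
  · have hev : ∀ᶠ k in nhdsWithin (0:ℝ) (Set.Ioi 0),
        ‖(spec_lemma μ₀ hcube hre k).choose / ((k ^ ((4:ℝ)/3) : ℝ) : ℂ) - μ₀‖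
          ≤ 4 * k ^ ((2:ℝ)/3) := by
      have h1 : ∀ᶠ k in nhdsWithin (0:ℝ) (Set.Ioi 0), k ≤ 1/1000 := by
        apply Filter.Eventually.filter_mono nhdsWithin_le_nhds
        filter_upwards [Iio_mem_nhds (show (0:ℝ) < 1/1000 by norm_num)] with k hk
        exact le_of_lt hk
      filter_upwards [h1, self_mem_nhdsWithin] with k hk1 hk2
      exact (((spec_lemma μ₀ hcube hre k).choose_spec hk2).2) hk1
    have hlim : Filter.Tendsto (fun k:ℝ => 4 * k ^ ((2:ℝ)/3))
        (nhdsWithin 0 (Set.Ioi 0)) (nhds 0) := by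
      have hc : ContinuousAt (fun k:ℝ => k ^ ((2:ℝ)/3)) 0 :=
        Real.continuousAt_rpow_const 0 _ (Or.inr (by norm_num))
      have t0 : Filter.Tendsto (fun k:ℝ => k ^ ((2:ℝ)/3)) (nhdsWithin 0 (Set.Ioi 0))
          (nhds ((0:ℝ) ^ ((2:ℝ)/3))) := hc.continuousWithinAt
      rw [Real.zero_rpow (by norm_num)] at t0
      have := t0.const_mul (4:ℝ)
      simpa using this
    have hdiff : Filter.Tendsto
        (fun k : ℝ => (spec_lemma μ₀ hcube hre k).choose / ((k ^ ((4:ℝ)/3) : ℝ) : ℂ) - μ₀)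
        (nhdsWithin 0 (Set.Ioi 0)) (nhds 0) :=
      squeeze_zero_norm' hev hlim
    have := hdiff.add_const μ₀
    simpa using this
end
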